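/- If C and D are updown categories, then their product category C × D, with objects Ob C × Ob D, morphism sets Hom((c,d),(c',d')) = Hom(c,c') × Hom(d,d'), and rank |(c,d)| = |c| + |d|, is again an updown category. -/

import Mathlib

/-! Core definitions: updown categories (Hoffman, "Updown categories"). -/

/-- The underlying data of a (small) category equipped with an ℕ-valued rank,
finite levels (given as `Finset`s) and a distinguished rank-0 object `zero`. -/
structure UpdownData where
  Obj : Type
  Hom : Obj → Obj → Type
  id : ∀ p : Obj, Hom p p
  comp : ∀ {p q r : Obj}, Hom p q → Hom q r → Hom p r
  id_comp : ∀ {p q : Obj} (f : Hom p q), comp (id p) f = f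
  comp_id : ∀ {p q : Obj} (f : Hom p q), comp f (id q) = f
  assoc : ∀ {p q r s : Obj} (f : Hom p q) (g : Hom q r) (h : Hom r s),
    comp (comp f g) h = comp f (comp g h)
  rank : Obj → ℕ
  level : ℕ → Finset Obj
  zero : Obj

namespace UpdownData

/-- Axioms A1–A5 of an updown category. -/
structure IsUpdownCat (C : UpdownData) : Prop where
  /-- `level n` is exactly the (finite) set of objects of rank `n` (A1). -/
  mem_level : ∀ (n : ℕ) (p : C.Obj), p ∈ C.level n ↔ C.rank p = n
  /-- A2: `zero` is the unique rank-0 object. -/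
  rank_zero : C.rank C.zero = 0
  zero_unique : ∀ p : C.Obj, C.rank p = 0 → p = C.zero
  /-- A2: there is a morphism from `zero` to every object. -/
  zero_init : ∀ p : C.Obj, Nonempty (C.Hom C.zero p)
  /-- A3: hom-sets are finite. -/
  homFinite : ∀ p q : C.Obj, Finite (C.Hom p q)
  /-- A3: `Hom p q` is empty unless `rank p < rank q` or `p = q`. -/
  hom_rank : ∀ p q : C.Obj, C.Hom p q → (C.rank p < C.rank q ∨ p = q)
  /-- A3: every endomorphism is invertible, so `Hom p p = Aut p` is a group. -/
  aut_group : ∀ (p : C.Obj) (f : C.Hom p p),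
    ∃ g : C.Hom p p, C.comp f g = C.id p ∧ C.comp g f = C.id p
  /-- A4: every morphism raising rank by more than one factors through the
  next level (hence, inductively, through all intermediate levels). -/
  factor : ∀ (p q : C.Obj) (f : C.Hom p q), C.rank p + 1 < C.rank q →
    ∃ (r : C.Obj) (g : C.Hom p r) (h : C.Hom r q),
      C.rank r = C.rank p + 1 ∧ C.comp g h = f
  /-- A5: `Aut p` acts freely on `Hom p q` by precomposition when
  `rank q = rank p + 1`. -/
  free_pre : ∀ (p q : C.Obj), C.rank q = C.rank p + 1 →
    ∀ (α : C.Hom p p) (f : C.Hom p q), C.comp α f = f → α = C.id p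
  /-- A5: `Aut q` acts freely on `Hom p q` by postcomposition when
  `rank q = rank p + 1`. -/
  free_post : ∀ (p q : C.Obj), C.rank q = C.rank p + 1 →
    ∀ (β : C.Hom q q) (f : C.Hom p q), C.comp f β = f → β = C.id q

/-- An updown category is unilateral if all automorphism groups are trivial. -/
def Unilateral (C : UpdownData) : Prop :=
  ∀ (p : C.Obj) (f : C.Hom p p), f = C.id p

/-- An updown category is simple if there is at most one morphism between any
two objects and morphisms factor uniquely into rank-1 steps (so the object at
each intermediate rank in a factorization is unique). -/
def SimpleUD (C : UpdownData) : Prop :=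
  (∀ p q : C.Obj, Subsingleton (C.Hom p q)) ∧
  (∀ (p q : C.Obj) (f : C.Hom p q) (k : ℕ), C.rank p < k → k < C.rank q →
    ∃! r : C.Obj, C.rank r = k ∧
      ∃ (g : C.Hom p r) (h : C.Hom r q), C.comp g h = f)

end UpdownData

/-! The product of updown categories. -/

namespace UpdownData

open Classical in
/-- The product of two updown data: objects are pairs, hom-sets are products of
hom-sets, and the rank is the sum of the ranks. -/
noncomputable def prod (C D : UpdownData) : UpdownData where
  Obj := C.Obj × D.Obj
  Hom p q := C.Hom p.1 q.1 × D.Hom p.2 q.2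
  id p := (C.id p.1, D.id p.2)
  comp f g := (C.comp f.1 g.1, D.comp f.2 g.2)
  id_comp f := by cases f; simp [C.id_comp, D.id_comp]
  comp_id f := by cases f; simp [C.comp_id, D.comp_id]
  assoc f g h := by simp [C.assoc, D.assoc]
  rank p := C.rank p.1 + D.rank p.2
  level n := (Finset.range (n + 1)).biUnion fun i => C.level i ×ˢ D.level (n - i)
  zero := (C.zero, D.zero)

end UpdownData

/-- Cancellation from A3: if every endomorphism is invertible, then
left multiplication by an endomorphism fixing another endomorphism is trivial. -/
theorem UpdownData.cancel_pre (C : UpdownData) (hC : C.IsUpdownCat)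
    {p : C.Obj} (α f : C.Hom p p) (_h : C.comp α f = C.id p → True)
    (hαf : C.comp α f = f) : α = C.id p := by
  obtain ⟨g, hg1, hg2⟩ := hC.aut_group p f
  calc α = C.comp α (C.id p) := (C.comp_id α).symm
    _ = C.comp α (C.comp f g) := by rw [hg1]
    _ = C.comp (C.comp α f) g := (C.assoc _ _ _).symm
    _ = C.comp f g := by rw [hαf]
    _ = C.id p := hg1

theorem UpdownData.cancel_post (C : UpdownData) (hC : C.IsUpdownCat)
    {p : C.Obj} (β f : C.Hom p p) (hβf : C.comp f β = f) : β = C.id p := by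
  obtain ⟨g, hg1, hg2⟩ := hC.aut_group p f
  calc β = C.comp (C.id p) β := (C.id_comp β).symm
    _ = C.comp (C.comp g f) β := by rw [hg2]
    _ = C.comp g (C.comp f β) := C.assoc _ _ _
    _ = C.comp g f := by rw [hβf]
    _ = C.id p := hg2

open UpdownData in
/-- the product of two updown categories is an updown category. -/
theorem updown_prod_isUpdownCat (C D : UpdownData)
    (hC : C.IsUpdownCat) (hD : D.IsUpdownCat) :
    (UpdownData.prod C D).IsUpdownCat := by
  constructor
  · -- mem_level
    intro n (p : C.Obj × D.Obj)
    show open Classical in p ∈ (Finset.range (n + 1)).biUnion (fun i => C.level i ×ˢ D.level (n - i)) ↔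
      C.rank p.1 + D.rank p.2 = n
    simp only [Finset.mem_biUnion, Finset.mem_range, Finset.mem_product,
      hC.mem_level, hD.mem_level]
    constructor
    · rintro ⟨i, hi, h1, h2⟩
      omega
    · intro h
      exact ⟨C.rank p.1, by omega, rfl, by omega⟩
  · -- rank_zero
    show C.rank C.zero + D.rank D.zero = 0
    rw [hC.rank_zero, hD.rank_zero]
  · -- zero_unique
    intro p hp
    have hp' : C.rank p.1 + D.rank p.2 = 0 := hp
    have h1 := hC.zero_unique p.1 (by omega)
    have h2 := hD.zero_unique p.2 (by omega)
    show p = (C.zero, D.zero)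
    exact Prod.ext h1 h2
  · -- zero_init
    intro p
    obtain ⟨f⟩ := hC.zero_init p.1
    obtain ⟨g⟩ := hD.zero_init p.2
    exact ⟨(f, g)⟩
  · -- homFinite
    intro p q
    have := hC.homFinite p.1 q.1
    have := hD.homFinite p.2 q.2
    exact Finite.instProd
  · -- hom_rank
    rintro p q ⟨f, g⟩
    have h1 := hC.hom_rank p.1 q.1 f
    have h2 := hD.hom_rank p.2 q.2 g
    show C.rank p.1 + D.rank p.2 < C.rank q.1 + D.rank q.2 ∨ p = q
    rcases h1 with h1 | h1 <;> rcases h2 with h2 | h2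
    · left; omega
    · left; rw [h2]; omega
    · left; rw [h1]; omega
    · right; exact Prod.ext h1 h2
  · -- aut_group
    rintro p ⟨f, g⟩
    obtain ⟨f', hf1, hf2⟩ := hC.aut_group p.1 f
    obtain ⟨g', hg1, hg2⟩ := hD.aut_group p.2 g
    exact ⟨(f', g'), by simp only [prod]; rw [hf1, hg1], by simp only [prod]; rw [hf2, hg2]⟩
  · -- factor
    rintro ⟨p1, p2⟩ ⟨q1, q2⟩ ⟨f, g⟩ hrank
    have hrank' : C.rank p1 + D.rank p2 + 1 < C.rank q1 + D.rank q2 := hrank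
    have h1 := hC.hom_rank p1 q1 f
    have h2 := hD.hom_rank p2 q2 g
    have hle1 : C.rank p1 ≤ C.rank q1 := by
      rcases h1 with h | h; · omega
      · rw [h]
    have hle2 : D.rank p2 ≤ D.rank q2 := by
      rcases h2 with h | h; · omega
      · rw [h]
    rcases lt_trichotomy (C.rank q1) (C.rank p1 + 1) with hc | hc | hc
    · -- rank q1 = rank p1, so q1 = p1, factor in D
      have hq1 : p1 = q1 := by
        rcases h1 with h | h; · omega
        · exact h
      subst hq1
      have hD2 : D.rank p2 + 1 < D.rank q2 := by omega
      obtain ⟨r2, g2, h2', hr2, hcomp⟩ := hD.factor p2 q2 g hD2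
      refine ⟨(p1, r2), (C.id p1, g2), (f, h2'), ?_, ?_⟩
      · show C.rank p1 + D.rank r2 = C.rank p1 + D.rank p2 + 1
        omega
      · show (C.comp (C.id p1) f, D.comp g2 h2') = (f, g)
        rw [C.id_comp, hcomp]
    · -- rank q1 = rank p1 + 1 : r = (q1, p2)
      refine ⟨(q1, p2), (f, D.id p2), (C.id q1, g), ?_, ?_⟩
      · show C.rank q1 + D.rank p2 = C.rank p1 + D.rank p2 + 1
        omega
      · show (C.comp f (C.id q1), D.comp (D.id p2) g) = (f, g)
        rw [C.comp_id, D.id_comp]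
    · -- rank q1 > rank p1 + 1 : factor in C
      obtain ⟨r1, g1, h1', hr1, hcomp⟩ := hC.factor p1 q1 f hc
      refine ⟨(r1, p2), (g1, D.id p2), (h1', g), ?_, ?_⟩
      · show C.rank r1 + D.rank p2 = C.rank p1 + D.rank p2 + 1
        omega
      · show (C.comp g1 h1', D.comp (D.id p2) g) = (f, g)
        rw [hcomp, D.id_comp]
  · -- free_pre
    rintro ⟨p1, p2⟩ ⟨q1, q2⟩ hrank ⟨α1, α2⟩ ⟨f1, f2⟩ hcomp
    have hrank' : C.rank q1 + D.rank q2 = C.rank p1 + D.rank p2 + 1 := hrank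
    have h1 := hC.hom_rank p1 q1 f1
    have h2 := hD.hom_rank p2 q2 f2
    have hcomp' : (C.comp α1 f1, D.comp α2 f2) = (f1, f2) := hcomp
    have hc1 : C.comp α1 f1 = f1 := congrArg Prod.fst hcomp'
    have hc2 : D.comp α2 f2 = f2 := congrArg Prod.snd hcomp'
    show (α1, α2) = (C.id p1, D.id p2)
    rcases h1 with h1 | h1
    · -- rank q1 > rank p1, so q2 = p2
      have hq2 : p2 = q2 := by
        rcases h2 with h | h
        · omega
        · exact h
      subst hq2
      have hc : C.rank q1 = C.rank p1 + 1 := by omega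
      refine Prod.ext (hC.free_pre p1 q1 hc α1 f1 hc1) ?_
      exact D.cancel_pre hD α2 f2 (fun _ => trivial) hc2
    · subst h1
      have hd : D.rank q2 = D.rank p2 + 1 := by omega
      refine Prod.ext ?_ (hD.free_pre p2 q2 hd α2 f2 hc2)
      exact C.cancel_pre hC α1 f1 (fun _ => trivial) hc1
  · -- free_post
    rintro ⟨p1, p2⟩ ⟨q1, q2⟩ hrank ⟨β1, β2⟩ ⟨f1, f2⟩ hcomp
    have hrank' : C.rank q1 + D.rank q2 = C.rank p1 + D.rank p2 + 1 := hrank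
    have h1 := hC.hom_rank p1 q1 f1
    have h2 := hD.hom_rank p2 q2 f2
    have hcomp' : (C.comp f1 β1, D.comp f2 β2) = (f1, f2) := hcomp
    have hc1 : C.comp f1 β1 = f1 := congrArg Prod.fst hcomp'
    have hc2 : D.comp f2 β2 = f2 := congrArg Prod.snd hcomp'
    show (β1, β2) = (C.id q1, D.id q2)
    rcases h1 with h1 | h1
    · have hq2 : p2 = q2 := by
        rcases h2 with h | h
        · omega
        · exact h
      subst hq2
      have hc : C.rank q1 = C.rank p1 + 1 := by omega
      refine Prod.ext (hC.free_post p1 q1 hc β1 f1 hc1) ?_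
      exact D.cancel_post hD β2 f2 hc2
    · subst h1
      have hd : D.rank q2 = D.rank p2 + 1 := by omega
      refine Prod.ext ?_ (hD.free_post p2 q2 hd β2 f2 hc2)
      exact C.cancel_post hC β1 f1 hc1
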